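/- Let α ≥ 0, δ ∈ (0, 1), and T a positive integer. Let Δ_1, ..., Δ_T be i.i.d. real random variables satisfying the low-noise condition P(|Δ_1| ≤ ε) ≤ ε^α for every ε ∈ (0, 1/2]. Then with probability at least 1 − log₂(12T) · δ, simultaneously for all ε ∈ (0, 1/2): #{ t ∈ [T] : |Δ_t| ≤ ε } ≤ 3 ε^α · T + 2 · L(T, δ), where L(T, δ) = log( 5.2 · (log(2T))^{1.4} / δ ). -/

import Mathlib

set_option maxHeartbeats 1000000

open MeasureTheory Finset

section ChernoffAux

open Real ProbabilityTheory

/-- Chernoff-style bound (at parameter `t = log 2`) for the number of indices `t`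
with `|Δ t ω| ≤ ε`, when each indicator has mean at most `p` and the `Δ i` are
independent. -/
lemma chernoff_count_aux {Ω : Type*} {m0 : MeasurableSpace Ω} (μ : Measure Ω)
    [IsProbabilityMeasure μ]
    {T : ℕ} (Δ : Fin T → Ω → ℝ) (hmeas : ∀ i, Measurable (Δ i))
    (hindep : ProbabilityTheory.iIndepFun Δ μ)
    (ε p a : ℝ)
    (hq : ∀ i, (μ {ω | |Δ i ω| ≤ ε}).toReal ≤ p) :
    μ {ω | a ≤ ((Finset.univ.filter fun t : Fin T => |Δ t ω| ≤ ε).card : ℝ)} ≤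
      ENNReal.ofReal (Real.exp (p * T - a * Real.log 2)) := by
  classical
  set g : ℝ → ℝ := fun x => if |x| ≤ ε then 1 else 0 with hg
  have hgm : Measurable g := Measurable.ite (measurableSet_le measurable_abs measurable_const)
    measurable_const measurable_const
  set X : Fin T → Ω → ℝ := fun i => g ∘ Δ i with hX
  have hXm : ∀ i, Measurable (X i) := fun i => hgm.comp (hmeas i)
  have hXindep : iIndepFun X μ := hindep.comp _ (fun _ => hgm)
  have hS : ∀ i, MeasurableSet {ω | |Δ i ω| ≤ ε} := fun i =>
    measurableSet_le (hmeas i).abs measurable_const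
  have hX01 : ∀ i ω, X i ω = 0 ∨ X i ω = 1 := by
    intro i ω
    by_cases h : |Δ i ω| ≤ ε <;> simp [hX, hg, h]
  have ht0 : (0:ℝ) ≤ Real.log 2 := Real.log_nonneg one_le_two
  -- mgf of each X i
  have hmgf : ∀ i, mgf (X i) μ (Real.log 2) ≤ Real.exp p := by
    intro i
    have hrw : (fun ω => Real.exp (Real.log 2 * X i ω)) =
        fun ω => Set.indicator {ω | |Δ i ω| ≤ ε} (fun _ => (1:ℝ)) ω + 1 := by
      funext ω
      by_cases h : |Δ i ω| ≤ ε
      · simp only [hX, hg, Function.comp_apply, h, if_true, mul_one,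
          Real.exp_log two_pos, Set.indicator_of_mem (by exact h : ω ∈ {ω | |Δ i ω| ≤ ε})]
        norm_num
      · simp [hX, hg, h, Set.indicator_of_notMem (by exact h : ω ∉ {ω | |Δ i ω| ≤ ε})]
    have hmgfeq : mgf (X i) μ (Real.log 2) = (μ {ω | |Δ i ω| ≤ ε}).toReal + 1 := by
      rw [mgf, hrw, integral_add ((integrable_const (1:ℝ)).indicator (hS i)) (integrable_const 1)]
      rw [MeasureTheory.integral_indicator_const (1:ℝ) (hS i)]
      simp [measureReal_def]
    rw [hmgfeq]
    have := hq i
    calc (μ {ω | |Δ i ω| ≤ ε}).toReal + 1 ≤ p + 1 := by linarith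
      _ ≤ Real.exp p := by linarith [Real.add_one_le_exp p]
  -- the count as a sum
  have hcount : ∀ ω, ((Finset.univ.filter fun t : Fin T => |Δ t ω| ≤ ε).card : ℝ) =
      (∑ i, X i) ω := by
    intro ω
    rw [Finset.sum_apply, Finset.card_filter]
    push_cast
    refine Finset.sum_congr rfl fun i _ => ?_
    by_cases h : |Δ i ω| ≤ ε <;> simp [hX, hg, h]
  have hbd : ∀ ω, (∑ i, X i) ω ≤ T := by
    intro ω
    rw [Finset.sum_apply]
    calc ∑ i, X i ω ≤ ∑ _i : Fin T, (1:ℝ) := by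
          refine Finset.sum_le_sum fun i _ => ?_
          rcases hX01 i ω with h | h <;> simp [h]
      _ = T := by simp
  have hmeasSum : Measurable (∑ i, X i) := by
    have h1 : (∑ i, X i) = fun ω => ∑ i, X i ω := by funext ω; rw [Finset.sum_apply]
    rw [h1]
    exact Finset.measurable_sum _ fun i _ => hXm i
  have hint : Integrable (fun ω => Real.exp (Real.log 2 * (∑ i, X i) ω)) μ := by
    refine Integrable.mono' (integrable_const (Real.exp (Real.log 2 * T)))
      ((hmeasSum.const_mul _).exp.aestronglyMeasurable) ?_
    filter_upwards with ω
    rw [Real.norm_eq_abs, abs_of_nonneg (Real.exp_nonneg _)]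
    exact Real.exp_le_exp.2 (mul_le_mul_of_nonneg_left (hbd ω) ht0)
  have hcher := measure_ge_le_exp_mul_mgf (X := ∑ i, X i) (μ := μ) a ht0 hint
  have hmgfsum : mgf (∑ i, X i) μ (Real.log 2) ≤ Real.exp (p * T) := by
    rw [hXindep.mgf_sum hXm Finset.univ]
    calc ∏ i, mgf (X i) μ (Real.log 2) ≤ ∏ _i : Fin T, Real.exp p :=
          Finset.prod_le_prod (fun i _ => mgf_nonneg) (fun i _ => hmgf i)
      _ = Real.exp p ^ T := by simp
      _ = Real.exp (p * T) := by rw [← Real.exp_nat_mul, mul_comm]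
  have hsetEq : {ω | a ≤ ((Finset.univ.filter fun t : Fin T => |Δ t ω| ≤ ε).card : ℝ)} =
      {ω | a ≤ (∑ i, X i) ω} := by
    ext ω; simp only [Set.mem_setOf_eq, hcount ω]
  rw [hsetEq]
  rw [ENNReal.le_ofReal_iff_toReal_le (measure_ne_top μ _) (Real.exp_nonneg _)]
  calc (μ {ω | a ≤ (∑ i, X i) ω}).toReal
      ≤ Real.exp (-Real.log 2 * a) * mgf (∑ i, X i) μ (Real.log 2) := hcher
    _ ≤ Real.exp (-Real.log 2 * a) * Real.exp (p * T) :=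
        mul_le_mul_of_nonneg_left hmgfsum (Real.exp_nonneg _)
    _ = Real.exp (p * T - a * Real.log 2) := by rw [← Real.exp_add]; ring_nf

end ChernoffAux

/-- Uniform-in-`ε` bound on the number of small-margin instances among `T`
i.i.d. margins satisfying the Mammen–Tsybakov low-noise condition with
exponent `α` (and constant 1). -/
theorem stmt_17 {Ω : Type*} {m0 : MeasurableSpace Ω} (μ : Measure Ω) [IsProbabilityMeasure μ]
    (α δ : ℝ) (hα : 0 ≤ α) (hδ : δ ∈ Set.Ioo (0 : ℝ) 1) (T : ℕ) (hT : 0 < T)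
    (Δ : Fin T → Ω → ℝ)
    (hmeas : ∀ i, Measurable (Δ i))
    (hindep : ProbabilityTheory.iIndepFun Δ μ)
    (hident : ∀ i j, ProbabilityTheory.IdentDistrib (Δ i) (Δ j) μ μ)
    (hnoise : ∀ i, ∀ ε : ℝ, 0 < ε → ε ≤ 1 / 2 → (μ {ω | |Δ i ω| ≤ ε}).toReal ≤ ε ^ α) :
    ENNReal.ofReal (1 - Real.logb 2 (12 * T) * δ) ≤
      μ {ω | ∀ ε : ℝ, 0 < ε → ε < 1 / 2 →
        ((Finset.univ.filter (fun t : Fin T => |Δ t ω| ≤ ε)).card : ℝ) ≤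
          3 * ε ^ α * T + 2 * Real.log (5.2 * Real.log (2 * T) ^ (1.4 : ℝ) / δ)} := by
  classical
  obtain ⟨hδ0, hδ1⟩ := hδ
  have hT1 : (1:ℝ) ≤ (T:ℝ) := by exact_mod_cast hT
  have h2T : (2:ℝ) ≤ 2*(T:ℝ) := by linarith
  have hlogpos : 0 < Real.log (2*(T:ℝ)) := Real.log_pos (by linarith)
  have hl2T : Real.log 2 ≤ Real.log (2*(T:ℝ)) := Real.log_le_log two_pos h2T
  have hl2lb := Real.log_two_gt_d9
  have hl2ub := Real.log_two_lt_d9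
  have hr : (0.48:ℝ) ≤ Real.log (2*(T:ℝ)) ^ (1.4:ℝ) := by
    rcases le_or_gt 1 (Real.log (2*(T:ℝ))) with h | h
    · have h1 : (1:ℝ)^(1.4:ℝ) ≤ Real.log (2*(T:ℝ)) ^ (1.4:ℝ) :=
        Real.rpow_le_rpow zero_le_one h (by norm_num)
      rw [Real.one_rpow] at h1
      linarith
    · have h2 : Real.log (2*(T:ℝ)) ^ (2:ℝ) ≤ Real.log (2*(T:ℝ)) ^ (1.4:ℝ) :=
        Real.rpow_le_rpow_of_exponent_ge hlogpos h.le (by norm_num)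
      have h3 : (0.48:ℝ) ≤ Real.log (2*(T:ℝ)) ^ (2:ℝ) := by
        rw [Real.rpow_two]
        nlinarith
      linarith
  have hArg2 : (2:ℝ) ≤ 5.2 * Real.log (2*(T:ℝ)) ^ (1.4:ℝ) := by linarith
  set L := Real.log (5.2 * Real.log (2 * (T:ℝ)) ^ (1.4:ℝ) / δ) with hLdef
  have hLeq : L = Real.log (5.2 * Real.log (2*(T:ℝ)) ^ (1.4:ℝ)) - Real.log δ := by
    rw [hLdef, Real.log_div (by positivity) (ne_of_gt hδ0)]
  have hlogδ : Real.log δ < 0 := Real.log_neg hδ0 hδ1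
  have hlA : Real.log 2 ≤ Real.log (5.2 * Real.log (2*(T:ℝ)) ^ (1.4:ℝ)) :=
    Real.log_le_log two_pos hArg2
  have hLpos : 0 < L := by rw [hLeq]; linarith
  have hlogbTpos : 0 ≤ Real.logb 2 (12*(T:ℝ)) := Real.logb_nonneg one_lt_two (by linarith)
  -- the key numeric bound
  have hexpδ : Real.exp (1/12 - 2*L*Real.log 2) ≤ δ/2 := by
    have key : 1/12 - 2*L*Real.log 2 ≤ Real.log δ - Real.log 2 := by
      rw [hLeq]
      nlinarith [mul_le_mul_of_nonneg_right hlA (by linarith : (0:ℝ) ≤ 2*Real.log 2),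
        mul_nonneg (neg_nonneg.2 hlogδ.le) (by linarith : (0:ℝ) ≤ 2*Real.log 2 - 1)]
    calc Real.exp (1/12 - 2*L*Real.log 2) ≤ Real.exp (Real.log δ - Real.log 2) :=
          Real.exp_le_exp.2 key
      _ = δ/2 := by rw [Real.exp_sub, Real.exp_log hδ0, Real.exp_log two_pos]
  rcases eq_or_lt_of_le hα with hα0 | hαpos
  · -- trivial case α = 0
    subst hα0
    have hset : {ω | ∀ ε : ℝ, 0 < ε → ε < 1 / 2 →
        ((Finset.univ.filter (fun t : Fin T => |Δ t ω| ≤ ε)).card : ℝ) ≤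
          3 * ε ^ (0:ℝ) * T + 2 * L} = Set.univ := by
      refine Set.eq_univ_of_forall fun ω ε hε0 hε12 => ?_
      rw [Real.rpow_zero]
      have hcard : ((Finset.univ.filter (fun t : Fin T => |Δ t ω| ≤ ε)).card : ℝ) ≤ T := by
        have h1 := Finset.card_filter_le (Finset.univ : Finset (Fin T)) (fun t => |Δ t ω| ≤ ε)
        have h2 : ((Finset.univ.filter (fun t : Fin T => |Δ t ω| ≤ ε)).card : ℝ) ≤
            ((Finset.univ : Finset (Fin T)).card : ℝ) := by exact_mod_cast h1
        simpa using h2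
      linarith
    rw [hset, measure_univ]
    refine ENNReal.ofReal_le_one.2 ?_
    have := mul_nonneg hlogbTpos hδ0.le
    push_cast
    linarith
  -- main case α > 0
  set J := Nat.clog 2 (12*T) with hJdef
  have hJpos : 0 < J := Nat.clog_pos one_lt_two (by omega)
  have hJ1 : 12*T ≤ 2^J := Nat.le_pow_clog one_lt_two _
  have hJ2 : 2^(J-1) < 12*T := Nat.pow_pred_clog_lt_self one_lt_two (by omega)
  -- (J+1)/2 ≤ logb 2 (12 T)
  have hJhalf : ((J:ℝ) + 1) * (1/2) ≤ Real.logb 2 (12*(T:ℝ)) := by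
    have hJr : (J:ℝ) - 1 ≤ Real.logb 2 (12*(T:ℝ)) := by
      have hc : ((2^(J-1):ℕ):ℝ) < ((12*T:ℕ):ℝ) := Nat.cast_lt.2 hJ2
      have hc2 : (2:ℝ)^((J:ℝ)-1) < 12*(T:ℝ) := by
        rw [show (J:ℝ)-1 = ((J-1:ℕ):ℝ) by rw [Nat.cast_sub hJpos]; norm_num,
          Real.rpow_natCast]
        push_cast at hc
        exact_mod_cast hc
      calc (J:ℝ)-1 = Real.logb 2 ((2:ℝ)^((J:ℝ)-1)) :=
            (Real.logb_rpow (b := 2) (by norm_num) (by norm_num)).symm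
        _ ≤ Real.logb 2 (12*(T:ℝ)) :=
            Real.logb_le_logb_of_le one_lt_two (Real.rpow_pos_of_pos two_pos _) hc2.le
    have hlb4 : (2:ℝ) ≤ Real.logb 2 (12*(T:ℝ)) := by
      rw [Real.le_logb_iff_rpow_le one_lt_two (by positivity)]
      have h4 : (2:ℝ)^(2:ℝ) = 4 := by
        rw [show (2:ℝ) = ((2:ℕ):ℝ) from by norm_num]
        rw [Real.rpow_natCast]
        norm_num
      rw [h4]; linarith
    linarith
  set e : ℕ → ℝ := fun k => min ((2:ℝ) ^ (-(k:ℝ)/α)) (1/2) with hedef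
  set a : ℕ → ℝ := fun k => (if k < J then 3/2 * (2:ℝ)^(-(k:ℝ)) * T else 0) + 2*L with hadef
  have hepos : ∀ k, 0 < e k := fun k => lt_min (Real.rpow_pos_of_pos two_pos _) (by norm_num)
  have hele : ∀ k, e k ≤ 1/2 := fun k => min_le_right _ _
  have heα : ∀ k, (e k) ^ α ≤ (2:ℝ)^(-(k:ℝ)) := by
    intro k
    calc (e k)^α ≤ ((2:ℝ)^(-(k:ℝ)/α))^α :=
          Real.rpow_le_rpow (hepos k).le (min_le_left _ _) hα
      _ = (2:ℝ)^(-(k:ℝ)/α*α) := (Real.rpow_mul (by norm_num) _ _).symm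
      _ = (2:ℝ)^(-(k:ℝ)) := by rw [div_mul_cancel₀ _ (ne_of_gt hαpos)]
  set cnt : ℝ → Ω → ℝ :=
    fun ε ω => ((Finset.univ.filter fun t : Fin T => |Δ t ω| ≤ ε).card : ℝ) with hcnt
  have hcm : ∀ ε, Measurable (cnt ε) := by
    intro ε
    have h1 : cnt ε = fun ω => ∑ t : Fin T, if |Δ t ω| ≤ ε then (1:ℝ) else 0 := by
      funext ω
      rw [hcnt]
      simp only
      rw [Finset.card_filter]
      push_cast
      exact Finset.sum_congr rfl fun i _ => by by_cases h : |Δ i ω| ≤ ε <;> simp [h]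
    rw [h1]
    exact Finset.measurable_sum _ fun t _ =>
      Measurable.ite (measurableSet_le (hmeas t).abs measurable_const)
        measurable_const measurable_const
  set G : ℕ → Set Ω := fun k => {ω | cnt (e k) ω ≤ a k} with hG
  have hGm : ∀ k, MeasurableSet (G k) := fun k => measurableSet_le (hcm _) measurable_const
  set E : Set Ω := ⋂ k ∈ Finset.range (J+1), G k with hE
  have hEm : MeasurableSet E :=
    MeasurableSet.biInter (Finset.range (J+1)).countable_toSet fun k _ => hGm k
  -- inclusion of the good event in the target set
  have hsub : E ⊆ {ω | ∀ ε : ℝ, 0 < ε → ε < 1/2 → cnt ε ω ≤ 3 * ε ^ α * T + 2 * L} := by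
    intro ω hω ε hε0 hε12
    have hε1 : ε < 1 := by linarith
    have hx0 : 0 < ε ^ α := Real.rpow_pos_of_pos hε0 _
    have hx1 : ε ^ α < 1 := Real.rpow_lt_one hε0.le hε1 hαpos
    have hxinv1 : 1 ≤ (ε^α)⁻¹ := (one_le_inv₀ hx0).2 hx1.le
    set j := ⌊Real.logb 2 (ε^α)⁻¹⌋₊ with hj
    have hlogb0 : 0 ≤ Real.logb 2 (ε^α)⁻¹ := Real.logb_nonneg one_lt_two hxinv1
    have hjle : (j:ℝ) ≤ Real.logb 2 (ε^α)⁻¹ := Nat.floor_le hlogb0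
    have hjgt : Real.logb 2 (ε^α)⁻¹ < j+1 := Nat.lt_floor_add_one _
    have hxj : ε^α ≤ (2:ℝ)^(-(j:ℝ)) := by
      have h1 : (2:ℝ)^(j:ℝ) ≤ (ε^α)⁻¹ :=
        (Real.le_logb_iff_rpow_le one_lt_two (by positivity)).1 hjle
      rw [Real.rpow_neg (by norm_num)]
      have h2 : 0 < (2:ℝ)^(j:ℝ) := Real.rpow_pos_of_pos two_pos _
      rw [le_inv_comm₀ hx0 h2] at *
      exact h1
    set k := min j J with hk
    have hxk : ε^α ≤ (2:ℝ)^(-(k:ℝ)) := by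
      refine hxj.trans (Real.rpow_le_rpow_of_exponent_le one_le_two ?_)
      have h1 : (k:ℝ) ≤ (j:ℝ) := Nat.cast_le.2 (min_le_left _ _)
      linarith
    have hεek : ε ≤ e k := by
      refine le_min ?_ hε12.le
      have h1 : (ε^α)^(α⁻¹) ≤ ((2:ℝ)^(-(k:ℝ)))^(α⁻¹) :=
        Real.rpow_le_rpow (by positivity) hxk (by positivity)
      rw [← Real.rpow_mul hε0.le, mul_inv_cancel₀ (ne_of_gt hαpos), Real.rpow_one,
        ← Real.rpow_mul (by norm_num), neg_mul, ← div_eq_mul_inv] at h1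
      rw [neg_div]
      exact h1
    have hmono : cnt ε ω ≤ cnt (e k) ω := by
      rw [hcnt]
      simp only
      have hss : (Finset.univ.filter fun t : Fin T => |Δ t ω| ≤ ε) ⊆
          (Finset.univ.filter fun t : Fin T => |Δ t ω| ≤ e k) := by
        intro t ht
        simp only [Finset.mem_filter, Finset.mem_univ, true_and] at *
        exact ht.trans hεek
      exact_mod_cast Finset.card_le_card hss
    have hkmem : cnt (e k) ω ≤ a k := by
      have hkJ : k ∈ Finset.range (J+1) :=
        Finset.mem_range.2 (Nat.lt_succ_of_le (min_le_right _ _))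
      exact Set.mem_iInter₂.1 hω k hkJ
    rcases lt_or_ge j J with hjJ | hjJ
    · have hkj : k = j := min_eq_left hjJ.le
      have hak : a k = 3/2 * (2:ℝ)^(-(j:ℝ)) * T + 2*L := by
        rw [hadef]; simp only [hkj, hjJ, if_true]
      have h2j : (2:ℝ)^(-(j:ℝ)) ≤ 2 * ε^α := by
        have h1 : (ε^α)⁻¹ < (2:ℝ)^((j:ℝ)+1) :=
          (Real.logb_lt_iff_lt_rpow one_lt_two (by positivity)).1 hjgt
        have hp1 : (0:ℝ) < (2:ℝ)^((j:ℝ)+1) := Real.rpow_pos_of_pos two_pos _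
        have h2 : ((2:ℝ)^((j:ℝ)+1))⁻¹ < ε^α := by
          rw [inv_lt_comm₀ hp1 hx0]
          exact h1
        have h3 : 2 * ((2:ℝ)^((j:ℝ)+1))⁻¹ = (2:ℝ)^(-(j:ℝ)) := by
          rw [← Real.rpow_neg (by norm_num : (0:ℝ) ≤ 2)]
          rw [show (2:ℝ) * (2:ℝ)^(-((j:ℝ)+1)) = (2:ℝ)^(1:ℝ) * (2:ℝ)^(-((j:ℝ)+1)) by
            rw [Real.rpow_one]]
          rw [← Real.rpow_add two_pos]
          ring_nf
        calc (2:ℝ)^(-(j:ℝ)) = 2 * ((2:ℝ)^((j:ℝ)+1))⁻¹ := h3.symm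
          _ ≤ 2 * ε^α := by linarith
      have hTnn : (0:ℝ) ≤ (T:ℝ) := Nat.cast_nonneg T
      calc cnt ε ω ≤ cnt (e k) ω := hmono
        _ ≤ a k := hkmem
        _ ≤ 3 * ε^α * T + 2*L := by
            rw [hak]
            have h6 := mul_le_mul_of_nonneg_right h2j hTnn
            linarith
    · have hkJ' : k = J := min_eq_right hjJ
      have hak : a k = 2*L := by rw [hadef]; simp [hkJ']
      have hTnn : (0:ℝ) ≤ (T:ℝ) := Nat.cast_nonneg T
      calc cnt ε ω ≤ cnt (e k) ω := hmono
        _ ≤ a k := hkmem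
        _ ≤ 3 * ε^α * T + 2*L := by
            rw [hak]
            have h6 : (0:ℝ) ≤ 3 * ε^α * T := by positivity
            linarith
  -- failure probability of each event
  have hfail : ∀ k ∈ Finset.range (J+1), μ ((G k)ᶜ) ≤ ENNReal.ofReal (δ/2) := by
    intro k hkmem
    have hkJ : k ≤ J := Nat.lt_succ_iff.1 (Finset.mem_range.1 hkmem)
    have hqk : ∀ i, (μ {ω | |Δ i ω| ≤ e k}).toReal ≤ (2:ℝ)^(-(k:ℝ)) := fun i =>
      (hnoise i (e k) (hepos k) (hele k)).trans (heα k)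
    have hch := chernoff_count_aux μ Δ hmeas hindep (e k) ((2:ℝ)^(-(k:ℝ))) (a k) hqk
    have hsub2 : (G k)ᶜ ⊆ {ω | a k ≤ cnt (e k) ω} := by
      intro ω hω
      simp only [hG, Set.mem_compl_iff, Set.mem_setOf_eq] at hω
      exact (lt_of_not_ge hω).le
    refine (measure_mono hsub2).trans (le_trans hch (ENNReal.ofReal_le_ofReal ?_))
    have hexp : (2:ℝ)^(-(k:ℝ)) * T - a k * Real.log 2 ≤ 1/12 - 2*L*Real.log 2 := by
      have h0 : (0:ℝ) ≤ (2:ℝ)^(-(k:ℝ)) * T := by positivity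
      rw [hadef]
      by_cases h : k < J
      · simp only [h, if_true]
        have h5 : (0:ℝ) ≤ ((2:ℝ)^(-(k:ℝ)) * T) * (3/2*Real.log 2 - 1) :=
          mul_nonneg h0 (by linarith)
        nlinarith [h5]
      · have hkJ' : k = J := le_antisymm hkJ (not_lt.1 h)
        simp only [h, if_false, zero_add]
        have h12 : (12*(T:ℝ)) ≤ (2:ℝ)^(J:ℝ) := by
          rw [Real.rpow_natCast]
          exact_mod_cast hJ1
        have hp : (0:ℝ) < (2:ℝ)^(J:ℝ) := Real.rpow_pos_of_pos two_pos _
        have h13 : (2:ℝ)^(-(k:ℝ)) * T ≤ 1/12 := by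
          rw [hkJ', Real.rpow_neg (by norm_num : (0:ℝ) ≤ 2)]
          nlinarith [mul_le_mul_of_nonneg_left h12 (inv_nonneg.2 hp.le),
            mul_inv_cancel₀ (ne_of_gt hp)]

        linarith
    exact le_trans (Real.exp_le_exp.2 hexp) hexpδ
  -- union bound
  have hEc : μ Eᶜ ≤ ENNReal.ofReal (Real.logb 2 (12*(T:ℝ)) * δ) := by
    have h1 : Eᶜ = ⋃ k ∈ Finset.range (J+1), (G k)ᶜ := by
      rw [hE]
      simp [Set.compl_iInter]
    calc μ Eᶜ ≤ ∑ k ∈ Finset.range (J+1), μ ((G k)ᶜ) := by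
          rw [h1]; exact measure_biUnion_finset_le _ _
      _ ≤ ∑ _k ∈ Finset.range (J+1), ENNReal.ofReal (δ/2) := Finset.sum_le_sum hfail
      _ = (J+1) * ENNReal.ofReal (δ/2) := by
          rw [Finset.sum_const, Finset.card_range, nsmul_eq_mul]
          push_cast
          ring
      _ = ENNReal.ofReal (((J+1:ℕ):ℝ) * (δ/2)) := by
          rw [ENNReal.ofReal_mul (Nat.cast_nonneg _), ENNReal.ofReal_natCast]
          push_cast
          ring
      _ ≤ ENNReal.ofReal (Real.logb 2 (12*(T:ℝ)) * δ) := by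
          refine ENNReal.ofReal_le_ofReal ?_
          have h7 := mul_le_mul_of_nonneg_right hJhalf hδ0.le
          push_cast
          nlinarith [h7]
  -- conclusion
  have hEc' : (μ Eᶜ).toReal ≤ Real.logb 2 (12*(T:ℝ)) * δ :=
    ENNReal.toReal_le_of_le_ofReal (by positivity) hEc
  have hsum1 : (μ E).toReal + (μ Eᶜ).toReal = 1 := by
    have h := measure_add_measure_compl (μ := μ) hEm
    have h2 := congrArg ENNReal.toReal h
    rwa [ENNReal.toReal_add (measure_ne_top _ _) (measure_ne_top _ _), measure_univ,
      ENNReal.toReal_one] at h2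
  calc ENNReal.ofReal (1 - Real.logb 2 (12 * T) * δ)
      ≤ ENNReal.ofReal ((μ E).toReal) := ENNReal.ofReal_le_ofReal (by push_cast; linarith)
    _ = μ E := ENNReal.ofReal_toReal (measure_ne_top _ _)
    _ ≤ _ := measure_mono hsub
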